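/- Let α>0, ω≥0 with 2ω<α and let b = sqrt((1 + sqrt(1−4ω²/α²))/2) (so b ≤ 1). Suppose v₁ : [R,∞) → ℝ is C², satisfies v₁'' ≥ v₁(v₁² − b²), b/√3 ≤ v₁ < b on [R,∞), and v₁(x) → b as x → ∞. Then there exists C > 0 such that b − v₁(x) ≥ (1/C)·e^{−b√2·x} for all sufficiently large x. -/

import Mathlib

open Real Filter

lemma max_principle (μ R : ℝ) (hμ : 0 < μ) (g : ℝ → ℝ) (hg : ContDiff ℝ 2 g)
    (hgR : 0 ≤ g R)
    (hineq : ∀ x, R ≤ x → deriv (deriv g) x ≤ μ ^ 2 * g x)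
    (hlim : Tendsto g atTop (nhds 0)) :
    ∀ x, R ≤ x → 0 ≤ g x := by
  have hgd : Differentiable ℝ g := hg.differentiable (by norm_num)
  have h2 : ContDiff ℝ ((1 : WithTop ℕ∞) + 1) g := by
    have : ((1 : WithTop ℕ∞) + 1) = 2 := by norm_num
    rwa [this]
  have hg1 : ContDiff ℝ 1 (deriv g) := (contDiff_succ_iff_deriv.1 h2).2.2
  have hgd2 : Differentiable ℝ (deriv g) := hg1.differentiable one_ne_zero
  set u : ℝ → ℝ := fun x => Real.exp (μ * x) * (deriv g x - μ * g x) with hu_def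
  have hu : ∀ x, HasDerivAt u (Real.exp (μ * x) * (deriv (deriv g) x - μ ^ 2 * g x)) x := by
    intro x
    have h1 : HasDerivAt (fun x => Real.exp (μ * x)) (Real.exp (μ * x) * (μ * 1)) x :=
      ((hasDerivAt_id x).const_mul μ).exp
    have h2 : HasDerivAt (fun x => deriv g x - μ * g x)
        (deriv (deriv g) x - μ * deriv g x) x :=
      ((hgd2 x).hasDerivAt).sub (((hgd x).hasDerivAt).const_mul μ)
    have : HasDerivAt u _ x := h1.mul h2
    convert this using 1
    ring
  have hu_anti : AntitoneOn u (Set.Ici R) := by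
    apply antitoneOn_of_deriv_nonpos (convex_Ici R)
    · exact fun x _ => (hu x).differentiableAt.continuousAt.continuousWithinAt
    · exact fun x _ => (hu x).differentiableAt.differentiableWithinAt
    · intro x hx
      rw [interior_Ici] at hx
      rw [(hu x).deriv]
      apply mul_nonpos_of_nonneg_of_nonpos (Real.exp_pos _).le
      have := hineq x hx.le
      linarith
  set p : ℝ → ℝ := fun x => Real.exp (-(μ * x)) * g x with hp_def
  have hp : ∀ x, HasDerivAt p (Real.exp (-(μ * x)) * (deriv g x - μ * g x)) x := by
    intro x
    have h1 : HasDerivAt (fun x => Real.exp (-(μ * x))) (Real.exp (-(μ * x)) * (-(μ * 1))) x :=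
      (((hasDerivAt_id x).const_mul μ).neg).exp
    have : HasDerivAt p _ x := h1.mul ((hgd x).hasDerivAt)
    convert this using 1
    ring
  intro x₁ hx₁
  by_contra hneg
  push_neg at hneg
  rcases lt_or_ge 0 (deriv g x₁ - μ * g x₁) with hq | hq
  · -- q x₁ > 0 : p strictly increasing on [R, x₁], contradiction with g R ≥ 0
    have hRx : R < x₁ := by
      rcases lt_or_eq_of_le hx₁ with h | h
      · exact h
      · exfalso; rw [← h] at hneg; linarith
    have hupos : ∀ y ∈ Set.Icc R x₁, 0 < u y := by
      intro y hy
      have h1 : u x₁ ≤ u y := hu_anti hy.1 hx₁ hy.2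
      have h2 : 0 < u x₁ := mul_pos (Real.exp_pos _) hq
      linarith
    have hmono : StrictMonoOn p (Set.Icc R x₁) := by
      apply strictMonoOn_of_deriv_pos (convex_Icc R x₁)
      · exact fun y _ => (hp y).differentiableAt.continuousAt.continuousWithinAt
      · intro y hy
        rw [interior_Icc] at hy
        rw [(hp y).deriv]
        have h3 : 0 < u y := hupos y ⟨hy.1.le, hy.2.le⟩
        have h4 : 0 < deriv g y - μ * g y := by
          by_contra h
          push_neg at h
          have := mul_nonpos_of_nonneg_of_nonpos (Real.exp_pos (μ * y)).le h
          rw [hu_def] at h3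
          simp only at h3
          linarith
        exact mul_pos (Real.exp_pos _) h4
    have h5 : p R < p x₁ := hmono ⟨le_refl R, hRx.le⟩ ⟨hRx.le, le_refl x₁⟩ hRx
    have h6 : 0 ≤ p R := mul_nonneg (Real.exp_pos _).le hgR
    have h7 : p x₁ < 0 := mul_neg_of_pos_of_neg (Real.exp_pos _) hneg
    linarith
  · -- q x₁ ≤ 0 : p nonincreasing on [x₁, ∞), contradiction with g → 0
    have hux₁ : u x₁ ≤ 0 := mul_nonpos_of_nonneg_of_nonpos (Real.exp_pos _).le hq
    have hpanti : AntitoneOn p (Set.Ici x₁) := by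
      apply antitoneOn_of_deriv_nonpos (convex_Ici x₁)
      · exact fun y _ => (hp y).differentiableAt.continuousAt.continuousWithinAt
      · exact fun y _ => (hp y).differentiableAt.differentiableWithinAt
      · intro y hy
        rw [interior_Ici] at hy
        rw [(hp y).deriv]
        have h1 : u y ≤ u x₁ := hu_anti hx₁ (le_trans hx₁ hy.le) hy.le
        have h2 : u y ≤ 0 := le_trans h1 hux₁
        have h3 : deriv g y - μ * g y ≤ 0 := by
          by_contra h
          push_neg at h
          have := mul_pos (Real.exp_pos (μ * y)) h
          rw [hu_def] at h2
          simp only at h2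
          linarith
        exact mul_nonpos_of_nonneg_of_nonpos (Real.exp_pos _).le h3
    have hev : ∀ y, x₁ ≤ y → g y ≤ g x₁ := by
      intro y hy
      have h1 : p y ≤ p x₁ := hpanti (Set.mem_Ici.2 (le_refl x₁)) (Set.mem_Ici.2 hy) hy
      have h2 : p x₁ < 0 := mul_neg_of_pos_of_neg (Real.exp_pos _) hneg
      have e1 : Real.exp (μ * x₁) ≤ Real.exp (μ * y) :=
        Real.exp_le_exp.2 (by nlinarith)
      have key : g y = Real.exp (μ * y) * p y := by
        rw [hp_def]
        simp only
        rw [← mul_assoc, ← Real.exp_add]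
        simp
      have key₁ : g x₁ = Real.exp (μ * x₁) * p x₁ := by
        rw [hp_def]
        simp only
        rw [← mul_assoc, ← Real.exp_add]
        simp
      rw [key, key₁]
      calc Real.exp (μ * y) * p y ≤ Real.exp (μ * y) * p x₁ :=
            mul_le_mul_of_nonneg_left h1 (Real.exp_pos _).le
        _ ≤ Real.exp (μ * x₁) * p x₁ := mul_le_mul_of_nonpos_right e1 h2.le
    have : (0 : ℝ) ≤ g x₁ :=
      le_of_tendsto hlim (eventually_atTop.2 ⟨x₁, hev⟩)
    linarith

theorem stmt_15 (α ω : ℝ) (hα : 0 < α) (hω : 0 ≤ ω) (hcond : 2 * ω < α)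
    (R : ℝ) (v₁ : ℝ → ℝ) (hv₁ : ContDiff ℝ 2 v₁) :
    let b := Real.sqrt ((1 + Real.sqrt (1 - 4 * ω ^ 2 / α ^ 2)) / 2)
    (∀ x, R ≤ x → deriv (deriv v₁) x ≥ v₁ x * (v₁ x ^ 2 - b ^ 2)) →
    (∀ x, R ≤ x → b / Real.sqrt 3 ≤ v₁ x ∧ v₁ x < b) →
    Filter.Tendsto v₁ Filter.atTop (nhds b) →
    ∃ C > (0 : ℝ), ∃ X : ℝ, ∀ x, X ≤ x →
      b - v₁ x ≥ 1 / C * Real.exp (-(b * Real.sqrt 2) * x) := by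
  intro b hineq hbounds hlim
  have hs : 0 ≤ Real.sqrt (1 - 4 * ω ^ 2 / α ^ 2) := Real.sqrt_nonneg _
  have hb : 0 < b := Real.sqrt_pos.2 (by linarith)
  set μ : ℝ := b * Real.sqrt 2 with hμ_def
  have hμ : 0 < μ := mul_pos hb (Real.sqrt_pos.2 (by norm_num))
  have hμsq : μ ^ 2 = 2 * b ^ 2 := by
    rw [hμ_def, mul_pow, Real.sq_sqrt (by norm_num : (0:ℝ) ≤ 2)]
    ring
  -- positivity of v₁ on [R, ∞)
  have hvpos : ∀ x, R ≤ x → 0 < v₁ x := by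
    intro x hx
    have h1 := (hbounds x hx).1
    have h3 : 0 < b / Real.sqrt 3 := div_pos hb (Real.sqrt_pos.2 (by norm_num))
    linarith
  set c : ℝ := b - v₁ R with hc_def
  have hc : 0 < c := by
    have := (hbounds R le_rfl).2
    simp [hc_def]; linarith
  set g : ℝ → ℝ := fun x => (b - v₁ x) - c * Real.exp (-(μ * (x - R))) with hg_def
  -- derivative facts for v₁
  have hvd : Differentiable ℝ v₁ := hv₁.differentiable (by norm_num)
  have h2' : ContDiff ℝ ((1 : WithTop ℕ∞) + 1) v₁ := by
    have : ((1 : WithTop ℕ∞) + 1) = 2 := by norm_num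
    rwa [this]
  have hv1 : ContDiff ℝ 1 (deriv v₁) := (contDiff_succ_iff_deriv.1 h2').2.2
  have hvd2 : Differentiable ℝ (deriv v₁) := hv1.differentiable one_ne_zero
  -- g is C²
  have hE : ContDiff ℝ 2 (fun x : ℝ => c * Real.exp (-(μ * (x - R)))) := by
    apply ContDiff.mul contDiff_const
    exact (Real.contDiff_exp.comp ((contDiff_const.mul (contDiff_id.sub contDiff_const)).neg))
  have hgC2 : ContDiff ℝ 2 g := (contDiff_const.sub hv₁).sub hE
  -- first derivative of g
  have hEd : ∀ x : ℝ, HasDerivAt (fun x => c * Real.exp (-(μ * (x - R))))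
      (-(c * μ) * Real.exp (-(μ * (x - R)))) x := by
    intro x
    have h1 : HasDerivAt (fun x : ℝ => -(μ * (x - R))) (-μ) x := by
      have : HasDerivAt (fun x : ℝ => x - R) 1 x := (hasDerivAt_id x).sub_const R
      have h' : HasDerivAt (fun x : ℝ => -(μ * (x - R))) _ x := (this.const_mul μ).neg; simpa using h'
    have : HasDerivAt (fun x => c * Real.exp (-(μ * (x - R)))) _ x := (h1.exp).const_mul c
    convert this using 1
    ring
  have hgderiv : deriv g = fun x => -deriv v₁ x + (c * μ) * Real.exp (-(μ * (x - R))) := by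
    funext x
    have h1 : HasDerivAt g (-deriv v₁ x + (c * μ) * Real.exp (-(μ * (x - R)))) x := by
      have h2 : HasDerivAt (fun x => b - v₁ x) (-deriv v₁ x) x := by
        have h' : HasDerivAt (fun x => b - v₁ x) _ x := (hasDerivAt_const x b).sub ((hvd x).hasDerivAt); simpa using h'
      have : HasDerivAt g _ x := h2.sub (hEd x)
      convert this using 1
      ring
    exact h1.deriv
  have hgderiv2 : ∀ x, deriv (deriv g) x
      = -deriv (deriv v₁) x - (c * μ ^ 2) * Real.exp (-(μ * (x - R))) := by
    intro x
    rw [hgderiv]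
    have h1 : HasDerivAt (fun x => -deriv v₁ x + (c * μ) * Real.exp (-(μ * (x - R))))
        (-deriv (deriv v₁) x - (c * μ ^ 2) * Real.exp (-(μ * (x - R)))) x := by
      have h2 : HasDerivAt (fun x => -deriv v₁ x) (-deriv (deriv v₁) x) x :=
        ((hvd2 x).hasDerivAt).neg
      have hlin : HasDerivAt (fun x : ℝ => -(μ * (x - R))) (-μ) x := by
        have : HasDerivAt (fun x : ℝ => x - R) 1 x := (hasDerivAt_id x).sub_const R
        have h' : HasDerivAt (fun x : ℝ => -(μ * (x - R))) _ x := (this.const_mul μ).neg; simpa using h'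
      have h4 : HasDerivAt (fun x => (c * μ) * Real.exp (-(μ * (x - R))))
          (-(c * μ ^ 2) * Real.exp (-(μ * (x - R)))) x := by
        have : HasDerivAt (fun x => (c * μ) * Real.exp (-(μ * (x - R)))) _ x := (hlin.exp).const_mul (c * μ)
        convert this using 1
        ring
      have : HasDerivAt (fun x => -deriv v₁ x + (c * μ) * Real.exp (-(μ * (x - R)))) _ x := h2.add h4
      convert this using 1
      ring
    exact h1.deriv
  -- the differential inequality for g
  have hgineq : ∀ x, R ≤ x → deriv (deriv g) x ≤ μ ^ 2 * g x := by
    intro x hx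
    rw [hgderiv2, hg_def]
    simp only
    have h1 := hineq x hx
    have h2 := (hbounds x hx).2
    have h3 := (hvpos x hx).le
    have key : v₁ x * (b ^ 2 - v₁ x ^ 2) ≤ 2 * b ^ 2 * (b - v₁ x) := by
      nlinarith [sq_nonneg (b - v₁ x), mul_nonneg (mul_nonneg (sq_nonneg (b - v₁ x)) h3) hb.le]
    rw [hμsq]
    nlinarith [Real.exp_pos (-(μ * (x - R)))]
  -- boundary and limit
  have hgR : 0 ≤ g R := by
    rw [hg_def]; simp [hc_def]
  have hglim : Tendsto g atTop (nhds 0) := by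
    rw [hg_def]
    have h1 : Tendsto (fun x => b - v₁ x) atTop (nhds 0) := by
      have := (tendsto_const_nhds (x := b) (f := atTop (α := ℝ))).sub hlim
      simpa using this
    have h2 : Tendsto (fun x : ℝ => c * Real.exp (-(μ * (x - R)))) atTop (nhds 0) := by
      have ha : Tendsto (fun x : ℝ => μ * (x - R)) atTop atTop := by
        apply Tendsto.const_mul_atTop hμ
        simpa [sub_eq_add_neg] using tendsto_atTop_add_const_right atTop (-R) tendsto_id
      have h3 : Tendsto (fun x : ℝ => -(μ * (x - R))) atTop atBot := tendsto_neg_atBot_iff.2 ha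
      have h4 : Tendsto (fun x : ℝ => Real.exp (-(μ * (x - R)))) atTop (nhds 0) :=
        Real.tendsto_exp_atBot.comp h3
      simpa using h4.const_mul c
    simpa using h1.sub h2
  have hmain := max_principle μ R hμ g hgC2 hgR hgineq hglim
  refine ⟨(c * Real.exp (μ * R))⁻¹, by positivity, R, fun x hx => ?_⟩
  have h1 := hmain x hx
  rw [hg_def] at h1
  simp only at h1
  have h2 : (1 : ℝ) / (c * Real.exp (μ * R))⁻¹ = c * Real.exp (μ * R) := by
    rw [one_div, inv_inv]
  rw [h2]
  have h3 : c * Real.exp (μ * R) * Real.exp (-(b * Real.sqrt 2) * x)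
      = c * Real.exp (-(μ * (x - R))) := by
    rw [mul_assoc, ← Real.exp_add, ← hμ_def]
    ring_nf
  rw [h3]
  linarith
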